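/- Let (X, w) be a weighted pure d-dimensional simplicial complex, let τ ∈ X(i), and let f ∈ C^{k+1}(X; ℝ) with i ≤ k ≤ d−1. Then the adjoint signless differential commutes with localization: (d_k^* f)_τ = d^*(f_τ), where the right-hand side is the adjoint signless differential of the link X_τ (taken with respect to the link weights w_τ) applied to the localization f_τ ∈ C^{k−i}(X_τ; ℝ). -/

import Mathlib

/-!
Weighted pure simplicial complexes, links, cochains, signless differentials
and high dimensional random walk operators.

Conventions: faces are `Finset`s of vertices. A cochain "of dimension `k`"
(an element of `C^k(X;ℝ)`) is represented by a function `Finset V → ℝ`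
evaluated on faces of **cardinality** `c = k + 1`; all operators are indexed
by cardinality.
-/

open Finset

namespace HDRW

noncomputable section

variable {V : Type*} [DecidableEq V] [Fintype V]

/-- A weighted family of faces (the data of a weighted complex or of a link). -/
structure WFam (V : Type*) [DecidableEq V] [Fintype V] where
  faces : Finset (Finset V)
  w : Finset V → ℝ

namespace WFam

/-- The faces of cardinality `c` (i.e. of dimension `c - 1`). -/
def dimFaces (Y : WFam V) (c : ℕ) : Finset (Finset V) :=
  Y.faces.filter fun σ => σ.card = c

/-- The link of a face `τ`, as a weighted family; the weights are
`w_τ(s) = w (s ∪ τ) / (C(|s| + |τ|, |τ|) * w τ)`. -/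
def link (Y : WFam V) (τ : Finset V) : WFam V where
  faces := Finset.univ.powerset.filter fun s => Disjoint s τ ∧ s ∪ τ ∈ Y.faces
  w := fun s => Y.w (s ∪ τ) / (((s.card + τ.card).choose τ.card : ℝ) * Y.w τ)

/-- The inner product of two `c`-cochains: `⟨f, g⟩ = Σ_{σ} w σ * f σ * g σ`. -/
def inner (Y : WFam V) (c : ℕ) (f g : Finset V → ℝ) : ℝ :=
  ∑ σ ∈ Y.dimFaces c, Y.w σ * (f σ * g σ)

/-- The squared norm `‖f‖² = ⟨f, f⟩` of a `c`-cochain. -/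
def norm2 (Y : WFam V) (c : ℕ) (f : Finset V → ℝ) : ℝ := Y.inner c f f

end WFam

/-- The signless differential `d` from cochains on faces of cardinality `c`
(dimension `c-1`) to cochains on faces of cardinality `c+1`:
`(d f)(σ) = (1/(c+1)) Σ_{τ ⊆ σ, |τ| = c} f τ`. -/
def sDiff (c : ℕ) (f : Finset V → ℝ) : Finset V → ℝ :=
  fun σ => ((c : ℝ) + 1)⁻¹ * ∑ τ ∈ σ.powerset.filter (fun τ => τ.card = c), f τ

/-- Iterated signless differential `C_a → C_{a+n}` (in cardinality indexing),
i.e. `d_{a+n-2} ⋯ d_{a-1}` in dimension indexing. -/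
def sDiffIter (a : ℕ) : ℕ → (Finset V → ℝ) → (Finset V → ℝ)
  | 0, f => f
  | n + 1, f => sDiff (a + n) (sDiffIter a n f)

namespace WFam

/-- The adjoint `d^*` of the signless differential, from cochains on faces of
cardinality `c+1` to cochains on faces of cardinality `c`; it is given by the
explicit formula `(d^* f)(τ) = Σ_{σ ∈ X(c), τ ⊆ σ} w_τ(σ ∖ τ) * f σ` (a sum
over the cardinality-`(c+1)` faces containing `τ`). -/
def sAdj (Y : WFam V) (c : ℕ) (f : Finset V → ℝ) : Finset V → ℝ :=
  fun τ => ∑ σ ∈ (Y.dimFaces (c + 1)).filter (fun σ => τ ⊆ σ),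
    (Y.link τ).w (σ \ τ) * f σ

/-- Iterated adjoint of the signless differential, `C_{a+n} → C_a`
(in cardinality indexing), i.e. `d_{a-1}^* ⋯ d_{a+n-2}^*`. -/
def sAdjIter (Y : WFam V) : ℕ → ℕ → (Finset V → ℝ) → (Finset V → ℝ)
  | _, 0, f => f
  | a, n + 1, f => Y.sAdj a (sAdjIter Y (a + 1) n f)

/-- The non-lazy up-down random walk operator `M⁺` on cochains of cardinality
`c` (dimension `k = c-1`): `(M⁺ f)(σ) = (1/(k+1)) Σ_{τ, σ ∪ τ ∈ X(k+1)} w_σ(τ∖σ) f τ`. -/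
def nonLazy (Y : WFam V) (c : ℕ) (f : Finset V → ℝ) : Finset V → ℝ :=
  fun σ => (c : ℝ)⁻¹ *
    ∑ τ ∈ (Y.dimFaces c).filter (fun τ => σ ∪ τ ∈ Y.dimFaces (c + 1)),
      (Y.link σ).w (τ \ σ) * f τ

/-- The (lazy) up-down random walk operator `U` on cochains of cardinality `c`
(dimension `k = c-1`):
`(U f)(σ) = (1/(k+2)) f σ + (1/(k+2)) Σ_{τ, σ ∪ τ ∈ X(k+1)} w_σ(τ∖σ) f τ`. -/
def upDown (Y : WFam V) (c : ℕ) (f : Finset V → ℝ) : Finset V → ℝ :=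
  fun σ => ((c : ℝ) + 1)⁻¹ * f σ + ((c : ℝ) + 1)⁻¹ *
    ∑ τ ∈ (Y.dimFaces c).filter (fun τ => σ ∪ τ ∈ Y.dimFaces (c + 1)),
      (Y.link σ).w (τ \ σ) * f τ

/-- The down-up random walk operator `D` on cochains of cardinality `c`
(dimension `k = c-1`). -/
def downUp (Y : WFam V) (c : ℕ) (f : Finset V → ℝ) : Finset V → ℝ :=
  fun σ => (c : ℝ)⁻¹ *
      (∑ τ' ∈ σ.powerset.filter (fun τ' => τ'.card = c - 1), (Y.link τ').w (σ \ τ')) * f σ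
    + (c : ℝ)⁻¹ *
      ∑ τ ∈ (Y.dimFaces c).filter (fun τ => τ ≠ σ ∧ σ ∩ τ ∈ Y.dimFaces (c - 1)),
        (Y.link (σ ∩ τ)).w (τ \ σ) * f τ

/-- The `i`-down-up operator `D^i = d ⋯ d d^* ⋯ d^*` (going down `i+1` steps and
back up) on cochains of cardinality `c` (dimension `k = c-1`); in dimension
indexing this is `D_k^i = d_{k-1} ⋯ d_{k-i-1} d_{k-i-1}^* ⋯ d_{k-1}^*`. -/
def downUpIter (Y : WFam V) (c i : ℕ) (f : Finset V → ℝ) : Finset V → ℝ :=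
  sDiffIter (c - (i + 1)) (i + 1) (Y.sAdjIter (c - (i + 1)) (i + 1) f)

/-- `Y` (through its 1-skeleton) is a `γ`-(one sided) spectral expander:
every function on the vertices orthogonal to the constants has Rayleigh
quotient of the non-lazy random walk at most `γ` (Rayleigh characterization of
"the second largest eigenvalue of `M₀⁺` is at most `γ`"). -/
def isExpander (Y : WFam V) (γ : ℝ) : Prop :=
  ∀ f : Finset V → ℝ, Y.inner 1 f (fun _ => 1) = 0 →
    Y.inner 1 (Y.nonLazy 1 f) f ≤ γ * Y.norm2 1 f

/-- `Y` (through its 1-skeleton) is connected: the eigenvalue `1` of the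
non-lazy random walk `M₀⁺` has multiplicity one, i.e. every nonzero function on
the vertices orthogonal to the constants has Rayleigh quotient strictly
less than `1`. -/
def isConnected (Y : WFam V) : Prop :=
  ∀ f : Finset V → ℝ, Y.inner 1 f (fun _ => 1) = 0 → Y.norm2 1 f ≠ 0 →
    Y.inner 1 (Y.nonLazy 1 f) f < Y.norm2 1 f

/-- `f` is an `i`-level cochain of cardinality `c` (dimension `k = c-1`) with
respect to localization: for every face `σ` of cardinality `i` (i.e. of
dimension `i-1`), the localization `f_σ` is orthogonal to the constants in the
link `X_σ`. -/
def isLevel (Y : WFam V) (i c : ℕ) (f : Finset V → ℝ) : Prop :=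
  ∀ σ ∈ Y.dimFaces i,
    (Y.link σ).inner (c - i) (fun s => f (σ ∪ s)) (fun _ => 1) = 0

/-- `f` is a proper `i`-level cochain of cardinality `c`: it is an `i`-level
cochain which is in addition orthogonal to every `(i+1)`-level cochain. -/
def isProperLevel (Y : WFam V) (i c : ℕ) (f : Finset V → ℝ) : Prop :=
  Y.isLevel i c f ∧ ∀ g : Finset V → ℝ, Y.isLevel (i + 1) c g → Y.inner c f g = 0

end WFam

/-- The coboundary operator on oriented cochains (represented by their values
on the increasing ordering of each face, with respect to a linear order on the
vertices): `(δ f)(σ) = Σ_{j} (-1)^j f(σ ∖ {j-th smallest element of σ})`. -/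
def coboundary {V : Type*} [LinearOrder V] [Fintype V] (f : Finset V → ℝ) :
    Finset V → ℝ :=
  fun σ => ∑ v ∈ σ, (-1 : ℝ) ^ (σ.filter (fun u => u < v)).card * f (σ.erase v)

/-- A weighted pure `d`-dimensional simplicial complex: a downward closed
family of faces, each contained in a face of cardinality `d+1`
(dimension `d`), together with a weight function `w : X → (0, 1]` summing to
`1` on the top faces and satisfying the averaging recurrence on lower faces. -/
structure WSC (V : Type*) [DecidableEq V] [Fintype V] (d : ℕ) extends WFam V where
  empty_mem : ∅ ∈ faces
  down_closed : ∀ ⦃σ⦄, σ ∈ faces → ∀ ⦃τ⦄, τ ⊆ σ → τ ∈ faces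
  isPure : ∀ σ ∈ faces, ∃ σ' ∈ faces, σ ⊆ σ' ∧ σ'.card = d + 1
  w_pos : ∀ σ ∈ faces, 0 < w σ
  w_le_one : ∀ σ ∈ faces, w σ ≤ 1
  w_sum_top : ∑ σ ∈ faces.filter (fun σ => σ.card = d + 1), w σ = 1
  w_down : ∀ τ ∈ faces, τ.card ≤ d →
    w τ = (((d + 1).choose τ.card : ℝ))⁻¹ *
      ∑ σ ∈ faces.filter (fun σ => σ.card = d + 1 ∧ τ ⊆ σ), w σ


variable {d : ℕ}

/-- For `τ ∈ X(i)` and `f ∈ C^{k+1}(X;ℝ)` with `i ≤ k ≤ d-1`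
(here `a = i + 1`, `c = k + 1`), the adjoint signless differential commutes
with localization: `(d_k^* f)_τ = d^*(f_τ)`, the right-hand side being the
adjoint signless differential of the link `X_τ` (with the link weights `w_τ`)
applied to the localization `f_τ ∈ C^{k-i}(X_τ;ℝ)`. -/
theorem sAdj_localization (X : WSC V d) (a c : ℕ) (hac : a ≤ c) (hc : c ≤ d)
    (τ : Finset V) (hτ : τ ∈ X.toWFam.dimFaces a) (f : Finset V → ℝ) :
    ∀ s ∈ (X.toWFam.link τ).dimFaces (c - a),
      X.toWFam.sAdj c f (τ ∪ s) =
        (X.toWFam.link τ).sAdj (c - a) (fun u => f (τ ∪ u)) s := by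
  intro s hs
  simp only [WFam.dimFaces, WFam.link, mem_filter, mem_powerset] at hs hτ
  obtain ⟨⟨-, hsd, hsm⟩, hscard⟩ := hs
  obtain ⟨hτm, hτcard⟩ := hτ
  have hτs : τ ∪ s ∈ X.faces := X.down_closed hsm (by
    rw [union_comm])
  have hτscard : (τ ∪ s).card = c := by
    rw [card_union_of_disjoint hsd.symm, hτcard, hscard]; omega
  unfold WFam.sAdj
  refine Finset.sum_bij' (fun σ _ => σ \ τ) (fun u _ => τ ∪ u) ?_ ?_ ?_ ?_ ?_
  · -- membership forward
    intro σ hσ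
    simp only [WFam.dimFaces, WFam.link, mem_filter, mem_powerset] at hσ ⊢
    obtain ⟨⟨hσm, hσcard⟩, hsub⟩ := hσ
    have hτσ : τ ⊆ σ := (subset_union_left).trans hsub
    have hsσ : s ⊆ σ := (subset_union_right).trans hsub
    refine ⟨⟨⟨subset_univ _, sdiff_disjoint, by rwa [sdiff_union_of_subset hτσ]⟩, ?_⟩,
      subset_sdiff.2 ⟨hsσ, hsd⟩⟩
    rw [card_sdiff_of_subset hτσ, hσcard, hτcard]; omega
  · -- membership backward
    intro u hu
    simp only [WFam.dimFaces, WFam.link, mem_filter, mem_powerset] at hu ⊢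
    obtain ⟨⟨⟨-, hud, hum⟩, hucard⟩, hsu⟩ := hu
    have hτum : τ ∪ u ∈ X.faces := by rwa [union_comm]
    refine ⟨⟨hτum, ?_⟩, union_subset_union_right hsu⟩
    rw [card_union_of_disjoint hud.symm, hτcard, hucard]; omega
  · intro σ hσ
    simp only [WFam.dimFaces, mem_filter] at hσ
    have hτσ : τ ⊆ σ := (subset_union_left).trans hσ.2
    exact union_sdiff_of_subset hτσ
  · intro u hu
    simp only [WFam.dimFaces, WFam.link, mem_filter, mem_powerset] at hu
    exact union_sdiff_cancel_left hu.1.1.2.1.symm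
  · -- values
    intro σ hσ
    simp only [WFam.dimFaces, mem_filter] at hσ
    obtain ⟨⟨hσm, hσcard⟩, hsub⟩ := hσ
    have hτσ : τ ⊆ σ := (subset_union_left).trans hsub
    have hsσ : s ⊆ σ := (subset_union_right).trans hsub
    show (X.toWFam.link (τ ∪ s)).w (σ \ (τ ∪ s)) * f σ =
      ((X.toWFam.link τ).link s).w ((σ \ τ) \ s) * f (τ ∪ (σ \ τ))
    rw [union_sdiff_of_subset hτσ]
    congr 1
    rw [show (σ \ τ) \ s = σ \ (τ ∪ s) from by rw [sdiff_sdiff, sup_eq_union]]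
    set t := σ \ (τ ∪ s) with htdef
    have htσ : t ∪ (τ ∪ s) = σ := sdiff_union_of_subset hsub
    have htd : Disjoint t (τ ∪ s) := sdiff_disjoint
    have ht1 : t.card = 1 := by
      rw [htdef, card_sdiff_of_subset hsub, hσcard, hτscard]; omega
    have hts : (t ∪ s) ∪ τ = σ := by
      rw [union_assoc, union_comm s τ, htσ]
    have htsd : Disjoint t s := htd.mono_right subset_union_right
    have htscard : (t ∪ s).card = c - a + 1 := by
      rw [card_union_of_disjoint htsd, ht1, hscard]; omega
    have htsm : (t ∪ s) ∪ τ ∈ X.faces := by rw [hts]; exact hσm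
    simp only [WFam.link]
    rw [hts, htσ, ht1, htscard, hτscard, hscard, hτcard, union_comm s τ]
    have h1 : c - a + 1 + a = c + 1 := by omega
    have h2 : c - a + a = c := by omega
    have h3 : 1 + c = c + 1 := by omega
    have h4 : 1 + (c - a) = c - a + 1 := by omega
    rw [h1, h2, h3, h4]
    have hWτ : (0:ℝ) < X.w τ := X.w_pos τ hτm
    have hWc : (0:ℝ) < X.w (τ ∪ s) := X.w_pos _ hτs
    have hch1 : ((c+1).choose c : ℝ) = (c:ℝ) + 1 := by
      rw [Nat.choose_succ_self_right]; push_cast; ring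
    have hch2 : (0:ℝ) < ((c+1).choose a : ℝ) := by
      exact_mod_cast Nat.choose_pos (by omega)
    have hch3 : (0:ℝ) < (c.choose a : ℝ) := by
      exact_mod_cast Nat.choose_pos hac
    have key : ((c+1).choose a : ℝ) * ((c:ℝ) - (a:ℝ) + 1) = ((c:ℝ) + 1) * (c.choose a : ℝ) := by
      have : (c+1).choose a * (c + 1 - a) = (c + 1) * c.choose a := by
        rw [← Nat.choose_succ_right_eq, Nat.add_one_mul_choose_eq]
      have := congrArg (Nat.cast (R := ℝ)) this
      push_cast [Nat.cast_sub (by omega : a ≤ c + 1)] at this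
      linarith [this]
    have hcast : ((c - a + 1 : ℕ) : ℝ) = (c:ℝ) - (a:ℝ) + 1 := by
      push_cast [Nat.cast_sub hac]; ring
    have hch4 : (((c - a + 1).choose (c - a) : ℕ) : ℝ) = (c:ℝ) - a + 1 := by
      rw [Nat.choose_succ_self_right]; exact hcast
    rw [hch1, hch4]
    have haR : (a:ℝ) ≤ c := by exact_mod_cast hac
    have hE : ((c:ℝ) - a + 1) ≠ 0 := by linarith
    have hA : (((c+1).choose a : ℕ) : ℝ) ≠ 0 := hch2.ne'
    have hB : ((c.choose a : ℕ) : ℝ) ≠ 0 := hch3.ne'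
    have hWτ' : X.w τ ≠ 0 := hWτ.ne'
    have hWc' : X.w (τ ∪ s) ≠ 0 := hWc.ne'
    field_simp
    ring_nf
    rw [Nat.add_comm 1 c]
    linear_combination X.w σ * key

end

end HDRW
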